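/- Let {P(t)}_{t≥0} be N×N row-stochastic matrices whose nonzero entries are uniformly bounded below by p⁺ > 0, and suppose each vertex has a self-loop (positive diagonal entries) and there exists t₀ ∈ ℕ such that for all t ≥ 0 the union over t ≤ s < t+t₀ of the directed graphs G(s) (with edge (i,j) iff p_{ij}(s) > 0) is strongly connected. Then there exists T ∈ ℕ (one can take T = (N−1)t₀) such that P(t+T,t) > 0 entrywise for all t ≥ 0. -/

import Mathlib

/-- Backward product: `bprod P t₀ k = P(t₀+k-1) ⋯ P(t₀+1) P(t₀)`, i.e. `P(t₀+k, t₀)`. -/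
def bprod {N : ℕ} (P : ℕ → Matrix (Fin N) (Fin N) ℝ) (t₀ : ℕ) : ℕ → Matrix (Fin N) (Fin N) ℝ
  | 0 => 1
  | k + 1 => P (t₀ + k) * bprod P t₀ k

lemma bprod_nonneg {N : ℕ} (P : ℕ → Matrix (Fin N) (Fin N) ℝ)
    (hP : ∀ t i j, 0 ≤ P t i j) (t : ℕ) :
    ∀ k i j, 0 ≤ bprod P t k i j := by
  intro k
  induction k with
  | zero =>
    intro i j
    simp only [bprod, Matrix.one_apply]
    split <;> norm_num
  | succ k ih =>
    intro i j
    show 0 ≤ (P (t + k) * bprod P t k) i j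
    rw [Matrix.mul_apply]
    exact Finset.sum_nonneg fun m _ => mul_nonneg (hP _ _ _) (ih m j)

lemma bprod_step {N : ℕ} (P : ℕ → Matrix (Fin N) (Fin N) ℝ)
    (hP : ∀ t i j, 0 ≤ P t i j) (t k : ℕ) (i m j : Fin N)
    (h1 : 0 < P (t + k) i m) (h2 : 0 < bprod P t k m j) :
    0 < bprod P t (k + 1) i j := by
  show 0 < (P (t + k) * bprod P t k) i j
  rw [Matrix.mul_apply]
  exact Finset.sum_pos'
    (fun x _ => mul_nonneg (hP _ _ _) (bprod_nonneg P hP t k x j))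
    ⟨m, Finset.mem_univ m, mul_pos h1 h2⟩

lemma bprod_mono {N : ℕ} (P : ℕ → Matrix (Fin N) (Fin N) ℝ)
    (hP : ∀ t i j, 0 ≤ P t i j) (hdiag : ∀ t i, 0 < P t i i)
    (t : ℕ) {k k' : ℕ} (hk : k ≤ k') {i j : Fin N} (h : 0 < bprod P t k i j) :
    0 < bprod P t k' i j := by
  induction k' with
  | zero => obtain rfl := Nat.le_zero.mp hk; exact h
  | succ k' ih =>
    rcases Nat.lt_or_ge k (k' + 1) with h' | h'
    · exact bprod_step P hP t k' i i j (hdiag _ _) (ih (Nat.lt_succ_iff.mp h'))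
    · have hkk : k = k' + 1 := le_antisymm hk h'
      exact hkk ▸ h

/-- If a path starts outside `S` and ends in `S`, some edge crosses into `S`. -/
lemma crossing_edge {N : ℕ} (S : Finset (Fin N)) :
    ∀ n (c : Fin (n + 1) → Fin N), c 0 ∉ S → c (Fin.last n) ∈ S →
      ∃ m : Fin n, c m.castSucc ∉ S ∧ c m.succ ∈ S := by
  intro n
  induction n with
  | zero => intro c h0 hl; exact absurd hl (by simpa using h0)
  | succ n ih =>
    intro c h0 hl
    by_cases h1 : c 1 ∈ S
    · refine ⟨0, ?_, ?_⟩
      · simpa using h0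
      · simpa using h1
    · obtain ⟨m, hm1, hm2⟩ := ih (fun i => c i.succ) h1 (by convert hl using 2; rw [Fin.succ_last])
      exact ⟨m.succ, by convert hm1 using 2; rw [Fin.succ_castSucc], by convert hm2 using 2⟩

theorem union_strongly_connected_implies_positive_product {N : ℕ} (hN : 0 < N)
    (P : ℕ → Matrix (Fin N) (Fin N) ℝ) (pplus : ℝ) (hp : 0 < pplus)
    (hrs : ∀ t, (∀ i j, 0 ≤ P t i j) ∧ ∀ i, ∑ j, P t i j = 1)
    (hlow : ∀ t i j, P t i j ≠ 0 → pplus ≤ P t i j)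
    (hdiag : ∀ t i, 0 < P t i i)
    (t₀ : ℕ) (ht₀ : 0 < t₀)
    (hconn : ∀ t : ℕ, ∀ i j : Fin N, ∃ n : ℕ, ∃ c : Fin (n + 1) → Fin N,
      c 0 = i ∧ c (Fin.last n) = j ∧
      ∀ m : Fin n, ∃ s : ℕ, t ≤ s ∧ s < t + t₀ ∧ 0 < P s (c m.castSucc) (c m.succ)) :
    ∃ T : ℕ, 0 < T ∧ ∀ t : ℕ, ∀ i j : Fin N, 0 < bprod P t T i j := by
  classical
  have hP : ∀ t i j, 0 ≤ P t i j := fun t => (hrs t).1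
  refine ⟨N * t₀, Nat.mul_pos hN ht₀, ?_⟩
  intro t i j
  set R : ℕ → Finset (Fin N) :=
    fun k => Finset.univ.filter (fun i => 0 < bprod P t k i j) with hR
  have hmemR : ∀ k x, x ∈ R k ↔ 0 < bprod P t k x j := by
    intro k x; simp [hR]
  have hmono : ∀ k k', k ≤ k' → R k ⊆ R k' := by
    intro k k' hk x hx
    exact (hmemR _ _).2 (bprod_mono P hP hdiag t hk ((hmemR _ _).1 hx))
  have hjR : ∀ k, j ∈ R k := by
    intro k
    refine (hmemR _ _).2 (bprod_mono P hP hdiag t (Nat.zero_le k) ?_)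
    simp [bprod, Matrix.one_apply]
  -- growth lemma
  have hgrow : ∀ k, R k ≠ Finset.univ → (R k).card < (R (k + t₀)).card := by
    intro k hne
    obtain ⟨u, hu⟩ : ∃ u, u ∉ R k := by
      by_contra h
      push_neg at h
      exact hne (Finset.eq_univ_iff_forall.mpr h)
    obtain ⟨n, c, hc0, hcl, hce⟩ := hconn (t + k) u j
    obtain ⟨m, hm1, hm2⟩ := crossing_edge (R k) n c (hc0 ▸ hu) (hcl ▸ hjR k)
    obtain ⟨s, hs1, hs2, hs3⟩ := hce m
    -- c m.castSucc enters R at step s - t + 1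
    have hts : t ≤ s := le_trans (Nat.le_add_right t k) hs1
    have hkst : k ≤ s - t := by omega
    have hmem : c m.succ ∈ R (s - t) := hmono k (s - t) hkst hm2
    have hstep : 0 < bprod P t (s - t + 1) (c m.castSucc) j := by
      refine bprod_step P hP t (s - t) _ (c m.succ) _ ?_ ((hmemR _ _).1 hmem)
      have : t + (s - t) = s := by omega
      rw [this]; exact hs3
    have hcin : c m.castSucc ∈ R (k + t₀) := by
      refine hmono (s - t + 1) (k + t₀) (by omega) ?_
      exact (hmemR _ _).2 hstep
    refine Finset.card_lt_card ?_
    refine Finset.ssubset_iff_of_subset (hmono k (k + t₀) (Nat.le_add_right _ _)) |>.mpr ?_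
    exact ⟨c m.castSucc, hcin, hm1⟩
  -- cardinality induction
  have hcard : ∀ n, R (n * t₀) = Finset.univ ∨ n + 1 ≤ (R (n * t₀)).card := by
    intro n
    induction n with
    | zero =>
      right
      simpa using Finset.card_pos.mpr ⟨j, hjR 0⟩
    | succ n ih =>
      by_cases huniv : R (n * t₀) = Finset.univ
      · left
        have := hmono (n * t₀) ((n + 1) * t₀) (by nlinarith)
        rw [huniv] at this
        exact Finset.eq_univ_iff_forall.mpr fun x => this (Finset.mem_univ x)
      · right
        have h1 : n + 1 ≤ (R (n * t₀)).card := (ih.resolve_left huniv)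
        have h2 := hgrow (n * t₀) huniv
        have h3 : (n + 1) * t₀ = n * t₀ + t₀ := by ring
        rw [h3]
        omega
  have hfin : R (N * t₀) = Finset.univ := by
    rcases hcard N with h | h
    · exact h
    · exfalso
      have := Finset.card_le_univ (R (N * t₀))
      simp only [Finset.card_univ, Fintype.card_fin] at this
      omega
  have : i ∈ R (N * t₀) := hfin ▸ Finset.mem_univ i
  exact (hmemR _ _).1 this
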